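/- arXiv:1606.06648 — 2 statements merged into one kernel-verified Lean document; each statement's English description precedes it below -/
import Mathlib

section
/- Optimality of the greedy (POD) decomposition: let b ∈ H and define a greedy sequence by f₀ = 0 and f_{n+1} = f_n + r_{n+1}⊗s_{n+1}, where (r_{n+1}, s_{n+1}) is a best rank-one approximation of b − f_n. Then for every n, f_n = Σ_{k=1}^n r_k⊗s_k is a best rank-n approximation of b: ‖b − f_n‖_F = min over all families (u_k, v_k)_{1≤k≤n} in ℝ^p × ℝ^q of ‖b − Σ_{k=1}^n u_k⊗v_k‖_F. -/
open Matrix Filter Topology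

noncomputable section

/-- The Frobenius inner product `⟨A,B⟩_F = trace(Aᵀ B)` on real `p × q` matrices. -/
def frobInner {p q : ℕ} (A B : Matrix (Fin p) (Fin q) ℝ) : ℝ := (Aᵀ * B).trace

/-- The Frobenius norm. -/
def frobNorm {p q : ℕ} (A : Matrix (Fin p) (Fin q) ℝ) : ℝ := Real.sqrt (frobInner A A)

/-- The rank-one matrix `r ⊗ s` with entries `(r ⊗ s)_{ij} = r i * s j`. -/
def tensor {p q : ℕ} (r : EuclideanSpace ℝ (Fin p)) (s : EuclideanSpace ℝ (Fin q)) :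
    Matrix (Fin p) (Fin q) ℝ := Matrix.of fun i j => r i * s j

namespace POD
variable {p q : ℕ}

lemma fi_sum (A B : Matrix (Fin p) (Fin q) ℝ) :
    frobInner A B = ∑ i, ∑ j, A i j * B i j := by
  simp only [frobInner, Matrix.trace, Matrix.diag, Matrix.mul_apply, Matrix.transpose_apply]
  exact Finset.sum_comm

lemma fi_comm (A B : Matrix (Fin p) (Fin q) ℝ) : frobInner A B = frobInner B A := by
  simp only [fi_sum]
  congr 1; ext i; congr 1; ext j; ring

lemma fi_self_nonneg (A : Matrix (Fin p) (Fin q) ℝ) : 0 ≤ frobInner A A := by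
  rw [fi_sum]
  exact Finset.sum_nonneg fun i _ => Finset.sum_nonneg fun j _ => mul_self_nonneg _

lemma frobNorm_le_frobNorm_iff (A B : Matrix (Fin p) (Fin q) ℝ) :
    frobNorm A ≤ frobNorm B ↔ frobInner A A ≤ frobInner B B := by
  rw [frobNorm, frobNorm, Real.sqrt_le_sqrt_iff (fi_self_nonneg B)]

lemma fi_sub_sub (X Y : Matrix (Fin p) (Fin q) ℝ) :
    frobInner (X - Y) (X - Y) =
      frobInner X X - 2 * frobInner X Y + frobInner Y Y := by
  have h := fi_comm X Y
  simp only [frobInner] at h ⊢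
  simp only [Matrix.transpose_sub, Matrix.sub_mul, Matrix.mul_sub, Matrix.trace_sub]
  linarith

lemma fi_add_add (X Y : Matrix (Fin p) (Fin q) ℝ) :
    frobInner (X + Y) (X + Y) =
      frobInner X X + 2 * frobInner X Y + frobInner Y Y := by
  have h := fi_comm X Y
  simp only [frobInner] at h ⊢
  simp only [Matrix.transpose_add, Matrix.add_mul, Matrix.mul_add, Matrix.trace_add]
  linarith

lemma fi_tensor (A : Matrix (Fin p) (Fin q) ℝ) (u : EuclideanSpace ℝ (Fin p))
    (v : EuclideanSpace ℝ (Fin q)) :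
    frobInner A (tensor u v) = ∑ i, u i * (∑ j, A i j * v j) := by
  rw [fi_sum]
  congr 1; ext i
  simp only [tensor, Matrix.of_apply, Finset.mul_sum]
  congr 1; ext j; ring

lemma fi_tensor' (A : Matrix (Fin p) (Fin q) ℝ) (u : EuclideanSpace ℝ (Fin p))
    (v : EuclideanSpace ℝ (Fin q)) :
    frobInner A (tensor u v) = ∑ j, v j * (∑ i, u i * A i j) := by
  rw [fi_sum, Finset.sum_comm]
  congr 1; ext j
  simp only [tensor, Matrix.of_apply, Finset.mul_sum]
  congr 1; ext i; ring

lemma fi_tensor_self (u : EuclideanSpace ℝ (Fin p)) (v : EuclideanSpace ℝ (Fin q)) :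
    frobInner (tensor u v) (tensor u v) = (∑ i, (u i)^2) * (∑ j, (v j)^2) := by
  rw [fi_sum, Finset.sum_mul_sum]
  congr 1; ext i; congr 1; ext j
  simp [tensor]; ring


lemma dot_sum_right {q m : ℕ} (x : Fin q → ℝ) (f : Fin m → Fin q → ℝ) :
    x ⬝ᵥ (∑ l, f l) = ∑ l, x ⬝ᵥ f l := by
  simp only [dotProduct, Finset.sum_apply, Finset.mul_sum]
  rw [Finset.sum_comm]

lemma dot_sum_left {q m : ℕ} (x : Fin q → ℝ) (f : Fin m → Fin q → ℝ) :
    (∑ l, f l) ⬝ᵥ x = ∑ l, f l ⬝ᵥ x := by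
  simp only [dotProduct, Finset.sum_apply, Finset.sum_mul]
  rw [Finset.sum_comm]

lemma sum_mulVec' {p' q m : ℕ} (A : Fin m → Matrix (Fin p') (Fin q) ℝ) (x : Fin q → ℝ) :
    (∑ l, A l) *ᵥ x = ∑ l, (A l) *ᵥ x := by
  ext a
  simp only [Matrix.mulVec, dotProduct, Finset.sum_apply, Matrix.sum_apply,
    Finset.sum_mul]
  rw [Finset.sum_comm]

lemma vecMulVec_mulVec' {q : ℕ} (v : Fin q → ℝ) (x : Fin q → ℝ) :
    vecMulVec v v *ᵥ x = (v ⬝ᵥ x) • v := by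
  ext a
  simp only [Matrix.mulVec, Matrix.vecMulVec_apply, dotProduct, Pi.smul_apply,
    smul_eq_mul]
  rw [Finset.sum_mul]
  apply Finset.sum_congr rfl; intro b _; ring

lemma vecMulVec_mul_vecMulVec {q : ℕ} (a b c d : Fin q → ℝ) :
    vecMulVec a b * vecMulVec c d = (b ⬝ᵥ c) • vecMulVec a d := by
  ext i j
  simp only [Matrix.mul_apply, Matrix.vecMulVec_apply, Matrix.smul_apply, smul_eq_mul,
    dotProduct, Finset.sum_mul]
  apply Finset.sum_congr rfl; intro e _; ring

lemma exists_proj {q n : ℕ} (v : Fin n → EuclideanSpace ℝ (Fin q)) :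
    ∃ M : Matrix (Fin q) (Fin q) ℝ, Mᵀ = M ∧ (∀ x : Fin q → ℝ, 0 ≤ x ⬝ᵥ M *ᵥ x) ∧
      (∀ x : Fin q → ℝ, x ⬝ᵥ M *ᵥ x ≤ x ⬝ᵥ x) ∧ M.trace ≤ (n:ℝ) ∧ M * M = M ∧
      (∀ k, M *ᵥ (v k : Fin q → ℝ) = (v k : Fin q → ℝ)) := by
  classical
  set V : Submodule ℝ (EuclideanSpace ℝ (Fin q)) := Submodule.span ℝ (Set.range v) with hVdef
  set m : ℕ := Module.finrank ℝ V with hmdef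
  set ob := stdOrthonormalBasis ℝ V with hobdef
  set w : Fin m → (Fin q → ℝ) := fun l => ((ob l : EuclideanSpace ℝ (Fin q)) : Fin q → ℝ)
    with hwdef
  have horm : ∀ l l', w l ⬝ᵥ w l' = if l = l' then (1:ℝ) else 0 := by
    intro l l'
    have h1 := orthonormal_iff_ite.mp ob.orthonormal l l'
    rw [Submodule.coe_inner] at h1
    rw [← h1]
    simp only [PiLp.inner_apply, RCLike.inner_apply, conj_trivial]
    rw [dotProduct]; exact Finset.sum_congr rfl fun _ _ => mul_comm _ _
  set M : Matrix (Fin q) (Fin q) ℝ := ∑ l, vecMulVec (w l) (w l) with hMdef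
  have hMs : Mᵀ = M := by
    rw [hMdef, Matrix.transpose_sum]
    apply Finset.sum_congr rfl; intro l _
    ext i j
    simp [Matrix.transpose_apply, Matrix.vecMulVec_apply]; ring
  have hMv : ∀ x : Fin q → ℝ, M *ᵥ x = ∑ l, (w l ⬝ᵥ x) • w l := by
    intro x
    rw [hMdef, sum_mulVec']
    apply Finset.sum_congr rfl; intro l _
    rw [vecMulVec_mulVec']
  have hdotc : ∀ (c : Fin m → ℝ) (l : Fin m), w l ⬝ᵥ (∑ l', c l' • w l') = c l := by
    intro c l
    rw [dot_sum_right]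
    have e : ∀ l', w l ⬝ᵥ (c l' • w l') = if l = l' then c l' else 0 := by
      intro l'
      rw [dotProduct_smul, smul_eq_mul, horm]
      by_cases h : l = l' <;> simp [h]
    rw [Finset.sum_congr rfl fun l' _ => e l', Finset.sum_ite_eq Finset.univ l,
      if_pos (Finset.mem_univ l)]
  have hqf : ∀ x : Fin q → ℝ, x ⬝ᵥ M *ᵥ x = ∑ l, (w l ⬝ᵥ x)^2 := by
    intro x
    rw [hMv, dot_sum_right]
    apply Finset.sum_congr rfl; intro l _
    rw [dotProduct_smul, smul_eq_mul, dotProduct_comm]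
    ring
  have hM0 : ∀ x : Fin q → ℝ, 0 ≤ x ⬝ᵥ M *ᵥ x := by
    intro x; rw [hqf]; exact Finset.sum_nonneg fun l _ => sq_nonneg _
  have hbessel : ∀ x : Fin q → ℝ, x ⬝ᵥ M *ᵥ x ≤ x ⬝ᵥ x := by
    intro x
    rw [hqf]
    set c : Fin m → ℝ := fun l => w l ⬝ᵥ x with hcdef
    set P : Fin q → ℝ := ∑ l, c l • w l with hPdef
    have h0 : 0 ≤ (x - P) ⬝ᵥ (x - P) := Finset.sum_nonneg fun a _ => mul_self_nonneg _
    have hxP : x ⬝ᵥ P = ∑ l, (c l)^2 := by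
      rw [hPdef, dot_sum_right]
      apply Finset.sum_congr rfl; intro l _
      rw [dotProduct_smul, smul_eq_mul, dotProduct_comm]
      rw [hcdef]; ring
    have hPx : P ⬝ᵥ x = ∑ l, (c l)^2 := by
      rw [hPdef, dot_sum_left]
      apply Finset.sum_congr rfl; intro l _
      rw [smul_dotProduct, smul_eq_mul]
      rw [hcdef]; ring
    have hPP : P ⬝ᵥ P = ∑ l, (c l)^2 := by
      rw [hPdef, dot_sum_left]
      apply Finset.sum_congr rfl; intro l _
      rw [smul_dotProduct, smul_eq_mul, ← hPdef, hdotc c l]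
      ring
    have hexp : (x - P) ⬝ᵥ (x - P) = x ⬝ᵥ x - ∑ l, (c l)^2 := by
      rw [sub_dotProduct, dotProduct_sub, dotProduct_sub, hxP, hPx, hPP]
      ring
    have : ∑ l, (c l)^2 ≤ x ⬝ᵥ x := by linarith [hexp ▸ h0]
    exact this
  have htr : M.trace = (m:ℝ) := by
    rw [hMdef, Matrix.trace_sum]
    have e : ∀ l : Fin m, (vecMulVec (w l) (w l)).trace = 1 := by
      intro l
      have h1 : (vecMulVec (w l) (w l)).trace = w l ⬝ᵥ w l := by
        simp [Matrix.trace, Matrix.diag, Matrix.vecMulVec_apply, dotProduct]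
      rw [h1, horm]
      simp
    rw [Finset.sum_congr rfl (fun l _ => e l)]
    simp
  have hmn : m ≤ n := by
    have h1 : Module.finrank ℝ V ≤ (Set.range v).toFinset.card := by
      rw [hVdef]
      exact finrank_span_le_card (Set.range v)
    have h2 : (Set.range v).toFinset.card ≤ n := by
      rw [Set.toFinset_range]
      calc (Finset.univ.image v).card ≤ Finset.univ.card := Finset.card_image_le
        _ = n := by simp
    omega
  have htrn : M.trace ≤ (n:ℝ) := by
    rw [htr]; exact_mod_cast hmn
  have hMM : M * M = M := by
    rw [hMdef, Finset.sum_mul_sum]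
    have e : ∀ l l' : Fin m, vecMulVec (w l) (w l) * vecMulVec (w l') (w l')
        = if l = l' then vecMulVec (w l) (w l') else 0 := by
      intro l l'
      rw [vecMulVec_mul_vecMulVec, horm]
      by_cases h : l = l' <;> simp [h]
    calc ∑ l, ∑ l', vecMulVec (w l) (w l) * vecMulVec (w l') (w l')
        = ∑ l, ∑ l', if l = l' then vecMulVec (w l) (w l') else 0 := by
          apply Finset.sum_congr rfl; intro l _
          apply Finset.sum_congr rfl; intro l' _
          exact e l l'
      _ = ∑ l, vecMulVec (w l) (w l) := by
          apply Finset.sum_congr rfl; intro l _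
          rw [Finset.sum_ite_eq Finset.univ l, if_pos (Finset.mem_univ l)]
  have hfix : ∀ x : EuclideanSpace ℝ (Fin q), x ∈ V → M *ᵥ (x : Fin q → ℝ) = x := by
    intro x hx
    set c : Fin m → ℝ := fun l => ob.repr ⟨x, hx⟩ l with hcdef
    have hrep : (x : Fin q → ℝ) = ∑ l, c l • w l := by
      have h1 := ob.sum_repr ⟨x, hx⟩
      have h2 : ((∑ l, ob.repr ⟨x, hx⟩ l • ob l : V) : EuclideanSpace ℝ (Fin q)) = x :=
        congrArg Subtype.val h1
      rw [← h2]
      rw [Submodule.coe_sum]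
      simp [hwdef, hcdef, WithLp.ofLp_sum]
      rfl
    rw [hrep, hMv]
    have e : ∀ l, (w l ⬝ᵥ (∑ l', c l' • w l')) • w l = c l • w l := by
      intro l
      rw [hdotc c l]
    rw [Finset.sum_congr rfl fun l _ => e l]
  refine ⟨M, hMs, hM0, hbessel, htrn, hMM, fun k => ?_⟩
  exact hfix (v k) (Submodule.subset_span ⟨k, rfl⟩)

lemma dot_sym {q : ℕ} {A : Matrix (Fin q) (Fin q) ℝ} (hA : Aᵀ = A) (x y : Fin q → ℝ) :
    x ⬝ᵥ A *ᵥ y = (A *ᵥ x) ⬝ᵥ y := by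
  rw [Matrix.dotProduct_mulVec]
  congr 1
  nth_rw 1 [← hA]
  exact Matrix.vecMul_transpose A x

lemma dot_single {q : ℕ} (M : Matrix (Fin q) (Fin q) ℝ) (a : Fin q) :
    (Pi.single a 1 : Fin q → ℝ) ⬝ᵥ M *ᵥ (Pi.single a 1 : Fin q → ℝ) = M a a := by
  simp [dotProduct, Matrix.mulVec, Pi.single_apply, ite_mul, mul_ite,
    Finset.sum_ite_eq', Finset.mem_univ]

lemma trace_nonneg_of_psd {q : ℕ} (M : Matrix (Fin q) (Fin q) ℝ)
    (hM0 : ∀ x : Fin q → ℝ, 0 ≤ x ⬝ᵥ M *ᵥ x) : 0 ≤ M.trace := by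
  have : ∀ a, 0 ≤ M a a := fun a => by
    have := hM0 (Pi.single a 1)
    rwa [dot_single] at this
  exact Finset.sum_nonneg fun a _ => this a

open scoped MatrixOrder in
lemma trace_prod_le {q : ℕ} (M C : Matrix (Fin q) (Fin q) ℝ) (σ2 : ℝ)
    (hMs : Mᵀ = M) (hM0 : ∀ x : Fin q → ℝ, 0 ≤ x ⬝ᵥ M *ᵥ x)
    (hC : ∀ x : Fin q → ℝ, x ⬝ᵥ C *ᵥ x ≤ σ2 * (x ⬝ᵥ x)) :
    (M * C).trace ≤ σ2 * M.trace := by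
  have hherm : M.IsHermitian := by
    rw [Matrix.IsHermitian]
    ext i j
    simp [Matrix.conjTranspose_apply]
    exact congrFun (congrFun hMs i) j
  have hPSD : M.PosSemidef := by
    refine Matrix.PosSemidef.of_dotProduct_mulVec_nonneg hherm fun x => ?_
    simpa using hM0 x
  set S := CFC.sqrt M with hSdef
  have hSS : S * S = M := by
    have := CFC.sq_sqrt M hPSD.nonneg
    rwa [pow_two] at this
  have hSsym : Sᵀ = S := by
    have hh := (CFC.sqrt_nonneg M).posSemidef.1
    rw [Matrix.IsHermitian] at hh
    ext i j
    have := congrFun (congrFun hh i) j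
    simpa [Matrix.conjTranspose_apply] using this
  have hSe : ∀ a b, S b a = S a b := fun a b => congrFun (congrFun hSsym a) b
  have key : (M * C).trace = ∑ a, (fun b => S a b) ⬝ᵥ C *ᵥ (fun b => S a b) := by
    rw [← hSS, Matrix.mul_assoc, Matrix.trace_mul_comm]
    simp only [Matrix.trace, Matrix.diag, Matrix.mul_apply, dotProduct, Matrix.mulVec,
      dotProduct]
    apply Finset.sum_congr rfl; intro a _
    simp_rw [Finset.sum_mul]
    rw [Finset.sum_comm]
    apply Finset.sum_congr rfl; intro c _
    rw [Finset.mul_sum]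
    apply Finset.sum_congr rfl; intro b _
    rw [hSe b a]
    ring
  rw [key]
  have hbd : ∀ a : Fin q, (fun b => S a b) ⬝ᵥ C *ᵥ (fun b => S a b)
      ≤ σ2 * ((fun b => S a b) ⬝ᵥ (fun b => S a b)) := fun a => hC _
  calc ∑ a, (fun b => S a b) ⬝ᵥ C *ᵥ (fun b => S a b)
      ≤ ∑ a, σ2 * ((fun b => S a b) ⬝ᵥ (fun b => S a b)) :=
        Finset.sum_le_sum fun a _ => hbd a
    _ = σ2 * M.trace := by
        rw [← Finset.mul_sum]
        congr 1
        rw [← hSS]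
        simp only [Matrix.trace, Matrix.diag, Matrix.mul_apply, dotProduct]
        apply Finset.sum_congr rfl; intro a _
        apply Finset.sum_congr rfl; intro b _
        rw [hSe b a]

lemma dot_vecMulVec {q : ℕ} (v x : Fin q → ℝ) :
    x ⬝ᵥ (vecMulVec v v) *ᵥ x = (v ⬝ᵥ x)^2 := by
  rw [vecMulVec_mulVec', dotProduct_smul]
  rw [dotProduct_comm]
  ring_nf

lemma trace_mul_vecMulVec {q : ℕ} (M : Matrix (Fin q) (Fin q) ℝ) (v : Fin q → ℝ) :
    (M * vecMulVec v v).trace = v ⬝ᵥ M *ᵥ v := by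
  simp only [Matrix.trace, Matrix.diag, Matrix.mul_apply, Matrix.vecMulVec_apply,
    dotProduct, Matrix.mulVec, dotProduct]
  apply Finset.sum_congr rfl; intro a _
  rw [Finset.mul_sum]
  apply Finset.sum_congr rfl; intro b _
  ring

lemma key_L {q : ℕ} (C : ℕ → Matrix (Fin q) (Fin q) ℝ) (σ2 : ℕ → ℝ)
    (hσ0 : ∀ j, 0 ≤ σ2 j)
    (hmono : ∀ j k, j ≤ k → σ2 k ≤ σ2 j)
    (hCsym : ∀ j, (C j)ᵀ = C j)
    (hCb : ∀ j (x : Fin q → ℝ), x ⬝ᵥ (C j) *ᵥ x ≤ σ2 j * (x ⬝ᵥ x))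
    (hstep : ∀ j, C j = 0 ∨ ∃ v : Fin q → ℝ, v ⬝ᵥ v = 1 ∧
        C j = C (j+1) + σ2 j • vecMulVec v v ∧ (C (j+1)) *ᵥ v = 0) :
    ∀ n j (M : Matrix (Fin q) (Fin q) ℝ), Mᵀ = M → (∀ x, 0 ≤ x ⬝ᵥ M *ᵥ x) →
      (∀ x, x ⬝ᵥ M *ᵥ x ≤ x ⬝ᵥ x) →
      (M * C j).trace ≤ (∑ k ∈ Finset.range n, σ2 (j+k)) + max (M.trace - n) 0 * σ2 (j+n) := by
  intro n
  induction n with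
  | zero =>
    intro j M hMs hM0 hM1
    have hT : 0 ≤ M.trace := trace_nonneg_of_psd M hM0
    simp only [Finset.range_zero, Finset.sum_empty, Nat.cast_zero, sub_zero, zero_add, add_zero]
    rw [max_eq_left hT]
    rw [mul_comm]
    exact trace_prod_le M (C j) (σ2 j) hMs hM0 (hCb j)
  | succ n ih =>
    intro j M hMs hM0 hM1
    rcases hstep j with hCz | ⟨v, hv1, hCdec, hCv⟩
    · rw [hCz, Matrix.mul_zero, Matrix.trace_zero]
      have h1 : 0 ≤ ∑ k ∈ Finset.range (n+1), σ2 (j+k) :=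
        Finset.sum_nonneg fun k _ => hσ0 _
      have h2 : 0 ≤ max (M.trace - (n+1:ℕ)) 0 * σ2 (j+(n+1)) :=
        mul_nonneg (le_max_right _ _) (hσ0 _)
      linarith
    · set W := vecMulVec v v with hWdef
      set Q := (1 : Matrix (Fin q) (Fin q) ℝ) - W with hQdef
      set β := v ⬝ᵥ M *ᵥ v with hβdef
      have hβ0 : 0 ≤ β := hM0 v
      have hβ1 : β ≤ 1 := by
        have := hM1 v
        rwa [hv1] at this
      have hWsym : Wᵀ = W := by
        ext a b; simp [hWdef, Matrix.transpose_apply, Matrix.vecMulVec_apply]; ring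
      have hWW : W * W = W := by
        ext a b
        simp only [hWdef, Matrix.mul_apply, Matrix.vecMulVec_apply]
        calc ∑ c, (v a * v c) * (v c * v b) = ∑ c, (v c * v c) * (v a * v b) := by
              apply Finset.sum_congr rfl; intro c _; ring
          _ = (v ⬝ᵥ v) * (v a * v b) := by rw [← Finset.sum_mul]; rfl
          _ = v a * v b := by rw [hv1]; ring
      have hQsym : Qᵀ = Q := by
        rw [hQdef, Matrix.transpose_sub, Matrix.transpose_one, hWsym]
      have hQQ : Q * Q = Q := by
        rw [hQdef]
        simp only [Matrix.sub_mul, Matrix.mul_sub, Matrix.one_mul, Matrix.mul_one, hWW]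
        abel
      set M' := Q * M * Q with hM'def
      have hM'sym : M'ᵀ = M' := by
        rw [hM'def]
        simp only [Matrix.transpose_mul, hQsym, hMs, Matrix.mul_assoc]
      have hqf : ∀ x : Fin q → ℝ, x ⬝ᵥ M' *ᵥ x = (Q *ᵥ x) ⬝ᵥ M *ᵥ (Q *ᵥ x) := by
        intro x
        rw [hM'def, ← Matrix.mulVec_mulVec, ← Matrix.mulVec_mulVec, dot_sym hQsym]
      have hM'0 : ∀ x, 0 ≤ x ⬝ᵥ M' *ᵥ x := fun x => by rw [hqf]; exact hM0 _
      have hM'1 : ∀ x, x ⬝ᵥ M' *ᵥ x ≤ x ⬝ᵥ x := by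
        intro x
        rw [hqf]
        have h1 : (Q *ᵥ x) ⬝ᵥ M *ᵥ (Q *ᵥ x) ≤ (Q *ᵥ x) ⬝ᵥ (Q *ᵥ x) := hM1 _
        have h2 : (Q *ᵥ x) ⬝ᵥ (Q *ᵥ x) = x ⬝ᵥ Q *ᵥ x := by
          rw [← dot_sym hQsym, Matrix.mulVec_mulVec, hQQ]
        have h3 : x ⬝ᵥ Q *ᵥ x = x ⬝ᵥ x - x ⬝ᵥ W *ᵥ x := by
          rw [hQdef, Matrix.sub_mulVec, dotProduct_sub, Matrix.one_mulVec]
        have h4 : 0 ≤ x ⬝ᵥ W *ᵥ x := by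
          rw [hWdef, dot_vecMulVec]
          exact sq_nonneg _
        linarith
      have htrW : (M * W).trace = β := by
        rw [hWdef, trace_mul_vecMulVec]
      have htr' : M'.trace = M.trace - β := by
        rw [hM'def, Matrix.trace_mul_cycle, hQQ]
        rw [hQdef, Matrix.sub_mul, Matrix.one_mul, Matrix.trace_sub]
        rw [Matrix.trace_mul_comm, htrW]
      have hCQ : Q * C (j+1) * Q = C (j+1) := by
        have hWC : W * C (j+1) = 0 := by
          ext a b
          simp only [hWdef, Matrix.mul_apply, Matrix.vecMulVec_apply, Matrix.zero_apply]
          have hvC : ∀ b', (∑ c, v c * C (j+1) c b') = 0 := by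
            intro b'
            have h5 : v ᵥ* C (j+1) = C (j+1) *ᵥ v := by
              nth_rw 1 [← hCsym (j+1)]
              exact Matrix.vecMul_transpose _ v
            have := congrFun h5 b'
            rw [hCv] at this
            simpa [Matrix.vecMul, dotProduct] using this
          calc ∑ c, (v a * v c) * C (j+1) c b = v a * ∑ c, v c * C (j+1) c b := by
                rw [Finset.mul_sum]; apply Finset.sum_congr rfl; intro c _; ring
            _ = 0 := by rw [hvC]; ring
        have hCW : C (j+1) * W = 0 := by
          have := congrArg Matrix.transpose hWC
          rwa [Matrix.transpose_mul, hWsym, hCsym, Matrix.transpose_zero] at this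
        rw [hQdef]
        simp only [Matrix.sub_mul, Matrix.mul_sub, Matrix.one_mul, Matrix.mul_one, hWC, hCW]
        simp
      have hMC' : (M * C (j+1)).trace = (M' * C (j+1)).trace := by
        conv_lhs => rw [← hCQ]
        rw [show M * (Q * C (j+1) * Q) = (M * Q * C (j+1)) * Q by
          simp only [Matrix.mul_assoc]]
        rw [Matrix.trace_mul_comm, hM'def]
        simp only [Matrix.mul_assoc]
      have htraceC : (M * C j).trace = (M * C (j+1)).trace + σ2 j * β := by
        rw [hCdec, Matrix.mul_add, Matrix.trace_add, Matrix.mul_smul, Matrix.trace_smul,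
          htrW, smul_eq_mul]
      have IH := ih (j+1) M' hM'sym hM'0 hM'1
      rw [htr'] at IH
      -- index bookkeeping
      have hidx : ∀ k : ℕ, j + 1 + k = j + (k+1) := fun k => by omega
      have hsum : ∑ k ∈ Finset.range (n+1), σ2 (j+k)
          = (∑ k ∈ Finset.range n, σ2 (j+1+k)) + σ2 j := by
        rw [Finset.sum_range_succ']
        congr 1
        apply Finset.sum_congr rfl; intro k _
        rw [hidx k]
      have hσ'le : σ2 (j+1+n) ≤ σ2 j := hmono j (j+1+n) (by omega)
      have hσ'0 : 0 ≤ σ2 (j+1+n) := hσ0 _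
      have hidx2 : j + (n+1) = j + 1 + n := by omega
      rw [hsum, hidx2]
      set T := M.trace with hTdef
      set σ' := σ2 (j+1+n) with hσ'def
      set Ssum := ∑ k ∈ Finset.range n, σ2 (j+1+k) with hSsumdef
      push_cast
      -- goal : (M * C j).trace ≤ Ssum + σ2 j + max (T - (n+1)) 0 * σ'
      have hmax : max (T - β - (n:ℝ)) 0 ≤ max (T - ((n:ℝ)+1)) 0 + (1 - β) := by
        apply max_le
        · have := le_max_left (T - ((n:ℝ)+1)) 0
          linarith
        · have := le_max_right (T - ((n:ℝ)+1)) 0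
          linarith
      have step1 : max (T - β - (n:ℝ)) 0 * σ' ≤ (max (T - ((n:ℝ)+1)) 0 + (1 - β)) * σ' :=
        mul_le_mul_of_nonneg_right hmax hσ'0
      have step2 : (1 - β) * σ' ≤ (1 - β) * σ2 j :=
        mul_le_mul_of_nonneg_left hσ'le (by linarith)
      have hIH2 : (M' * C (j+1)).trace ≤ Ssum + max (T - β - (n:ℝ)) 0 * σ' := IH
      have hfin : (M * C j).trace = (M' * C (j+1)).trace + σ2 j * β := by
        rw [htraceC, hMC']
      rw [hfin]
      nlinarith [step1, step2, hσ0 j, hIH2]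

lemma tensor_transpose (u : EuclideanSpace ℝ (Fin p)) (v : EuclideanSpace ℝ (Fin q)) :
    (tensor u v)ᵀ = tensor v u := by
  ext j i
  simp [tensor, Matrix.transpose_apply, mul_comm]

lemma fi_self_transpose (A : Matrix (Fin p) (Fin q) ℝ) :
    frobInner Aᵀ Aᵀ = frobInner A A := by
  rw [fi_sum, fi_sum, Finset.sum_comm]
  simp [Matrix.transpose_apply]

lemma frobNorm_transpose (A : Matrix (Fin p) (Fin q) ℝ) :
    frobNorm Aᵀ = frobNorm A := by
  rw [frobNorm, frobNorm, fi_self_transpose]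


section Best
variable {R : Matrix (Fin p) (Fin q) ℝ} {r : EuclideanSpace ℝ (Fin p)}
  {s : EuclideanSpace ℝ (Fin q)}
  (hb : ∀ (u : EuclideanSpace ℝ (Fin p)) (v : EuclideanSpace ℝ (Fin q)),
    frobNorm (R - tensor r s) ≤ frobNorm (R - tensor u v))

include hb

lemma best_sq : ∀ (u : EuclideanSpace ℝ (Fin p)) (v : EuclideanSpace ℝ (Fin q)),
    frobInner (R - tensor r s) (R - tensor r s) ≤
      frobInner (R - tensor u v) (R - tensor u v) :=
  fun u v => (frobNorm_le_frobNorm_iff _ _).mp (hb u v)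

lemma best_R_zero (h0 : tensor r s = 0) : R = 0 := by
  have hb2 := best_sq hb
  ext i j
  have h := hb2 (EuclideanSpace.single i (1:ℝ)) (EuclideanSpace.single j (R i j))
  rw [h0, sub_zero, fi_sub_sub, fi_tensor, fi_tensor_self] at h
  simp only [EuclideanSpace.single_apply, ite_mul, mul_ite, one_mul, zero_mul, mul_zero,
    ite_pow, one_pow, Finset.sum_ite_eq', Finset.mem_univ, if_true] at h
  have hz : (0:ℝ)^2 = 0 := by norm_num
  rw [hz] at h
  simp only [Finset.sum_ite_eq', Finset.mem_univ, if_true] at h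
  have h2 : (R i j)^2 ≤ 0 := by nlinarith [h]
  have h3 := le_antisymm h2 (sq_nonneg _)
  have h4 := pow_eq_zero_iff (two_ne_zero) |>.mp h3
  simpa using h4

lemma best_E2 : ∀ j, ∑ i, r i * R i j = (∑ i, (r i)^2) * s j := by
  intro j
  have hb2 := best_sq hb
  by_cases h0 : tensor r s = 0
  · have hR := best_R_zero hb h0
    simp only [hR, Matrix.zero_apply, mul_zero, Finset.sum_const_zero]
    by_cases hr : ∀ i, r i = 0
    · simp [hr]
    · push_neg at hr
      obtain ⟨i, hi⟩ := hr
      have hrs : r i * s j = 0 := by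
        have := congrFun (congrFun h0 i) j
        simpa [tensor] using this
      rcases mul_eq_zero.mp hrs with h | h
      · exact absurd h hi
      · simp [h]
  · have hex : ∃ i, r i ≠ 0 := by
      by_contra hc
      push_neg at hc
      exact h0 (by ext i j'; simp [tensor, hc])
    obtain ⟨i0, hi0⟩ := hex
    set ρ : ℝ := ∑ i, (r i)^2 with hρdef
    have hρ : 0 < ρ := by
      have h1 : (r i0)^2 ≤ ρ := Finset.single_le_sum (fun i _ => sq_nonneg (r i)) (Finset.mem_univ i0)
      have h2 : 0 < (r i0)^2 := by positivity
      linarith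
    set g : Fin q → ℝ := fun j' => ∑ i, r i * R i j' with hgdef
    set v' : EuclideanSpace ℝ (Fin q) := (WithLp.toLp 2 (fun j' => g j' / ρ : Fin q → ℝ) : EuclideanSpace ℝ (Fin q)) with hv'def
    set ς : ℝ := ∑ j', (s j')^2 with hςdef
    set G : ℝ := ∑ j', (g j')^2 with hGdef
    have key := hb2 r v'
    have h1 : frobInner (R - tensor r s) (R - tensor r s)
        = frobInner R R - 2 * frobInner R (tensor r s) + frobInner (tensor r s) (tensor r s) :=
      fi_sub_sub R (tensor r s)
    have h2 : frobInner R (tensor r s) = ∑ j', s j' * g j' := fi_tensor' R r s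
    have h3 : frobInner (tensor r s) (tensor r s) = ρ * ς := fi_tensor_self r s
    have h4 : frobInner (R - tensor r v') (R - tensor r v')
        = frobInner R R - 2 * frobInner R (tensor r v') + frobInner (tensor r v') (tensor r v') :=
      fi_sub_sub R (tensor r v')
    have h5 : frobInner R (tensor r v') = G / ρ := by
      rw [fi_tensor']
      rw [hGdef, Finset.sum_div]
      congr 1; ext j'
      show (g j' / ρ) * (∑ i, r i * R i j') = (g j')^2 / ρ
      have : (∑ i, r i * R i j') = g j' := rfl
      rw [this]; ring
    have h6 : frobInner (tensor r v') (tensor r v') = G / ρ := by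
      rw [fi_tensor_self]
      have e3 : (∑ j', (v' j')^2) = G / ρ^2 := by
        rw [hGdef, Finset.sum_div]
        congr 1; ext j'
        show (g j' / ρ)^2 = (g j')^2 / ρ^2
        ring
      rw [e3, ← hρdef]
      field_simp
    rw [h1, h2, h3, h4, h5, h6] at key
    -- key : fiRR - 2*(Σ s g) + ρ*ς ≤ fiRR - 2*(G/ρ) + G/ρ
    have hkey2 : G - 2*ρ*(∑ j', s j' * g j') + ρ^2 * ς ≤ 0 := by
      have hstep : ρ * ς - 2 * (∑ j', s j' * g j') ≤ - (G/ρ) := by linarith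
      have h7 := mul_le_mul_of_nonneg_left hstep (le_of_lt hρ)
      have h8 : ρ * (-(G/ρ)) = -G := by field_simp
      rw [h8] at h7
      nlinarith [h7]
    have hexp : ∑ j', (g j' - ρ * s j')^2 = G - 2*ρ*(∑ j', s j' * g j') + ρ^2 * ς := by
      have e : ∀ j' : Fin q, (g j' - ρ * s j')^2
          = (g j')^2 - 2*ρ*(s j' * g j') + ρ^2 * (s j')^2 := fun j' => by ring
      simp_rw [e, Finset.sum_add_distrib, Finset.sum_sub_distrib, ← Finset.mul_sum]
      rfl
    have hzero : ∑ j', (g j' - ρ * s j')^2 = 0 := by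
      have h6' : ∑ j', (g j' - ρ * s j')^2 ≤ 0 := by rw [hexp]; exact hkey2
      exact le_antisymm h6' (Finset.sum_nonneg fun _ _ => sq_nonneg _)
    have hj := (Finset.sum_eq_zero_iff_of_nonneg
      (fun j' _ => sq_nonneg (g j' - ρ * s j'))).mp hzero j (Finset.mem_univ j)
    have hj2 := pow_eq_zero_iff (two_ne_zero) |>.mp hj
    have : g j = ρ * s j := by linarith [sub_eq_zero.mp hj2]
    exact this


lemma best_transpose :
    ∀ (u : EuclideanSpace ℝ (Fin q)) (v : EuclideanSpace ℝ (Fin p)),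
    frobNorm (Rᵀ - tensor s r) ≤ frobNorm (Rᵀ - tensor u v) := by
  intro u v
  have e1 : Rᵀ - tensor s r = (R - tensor r s)ᵀ := by
    rw [Matrix.transpose_sub, tensor_transpose]
  have e2 : Rᵀ - tensor u v = (R - tensor v u)ᵀ := by
    rw [Matrix.transpose_sub, tensor_transpose]
  rw [e1, e2, frobNorm_transpose, frobNorm_transpose]
  exact hb v u

lemma best_E1 : ∀ i, ∑ j, R i j * s j = (∑ j, (s j)^2) * r i := by
  intro i
  have h := best_E2 (best_transpose hb) i
  simp only [Matrix.transpose_apply] at h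
  calc ∑ j, R i j * s j = ∑ j, s j * R i j := by
        apply Finset.sum_congr rfl; intro j _; ring
    _ = (∑ j, (s j)^2) * r i := h

lemma best_fiRt : frobInner R (tensor r s) = (∑ i, (r i)^2) * (∑ j, (s j)^2) := by
  rw [fi_tensor]
  have e : ∀ i : Fin p, (∑ j, R i j * s j) = (∑ j, (s j)^2) * r i := best_E1 hb
  calc ∑ i, r i * (∑ j, R i j * s j) = ∑ i, r i * ((∑ j, (s j)^2) * r i) := by
        apply Finset.sum_congr rfl; intro i _; rw [e i]
    _ = (∑ i, (r i)^2) * (∑ j, (s j)^2) := by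
        rw [Finset.sum_mul]
        apply Finset.sum_congr rfl; intro i _; ring

lemma best_P2 : ∀ x : Fin q → ℝ,
    ∑ i, (∑ j, R i j * x j)^2 ≤ ((∑ i, (r i)^2) * (∑ j, (s j)^2)) * (∑ j, (x j)^2) := by
  intro x
  set y : Fin p → ℝ := fun i => ∑ j, R i j * x j with hydef
  set X : ℝ := ∑ j, (x j)^2 with hXdef
  set Y : ℝ := ∑ i, (y i)^2 with hYdef
  by_cases hX : X = 0
  · have hxz : ∀ j, x j = 0 := by
      intro j
      have h2 := (Finset.sum_eq_zero_iff_of_nonneg (fun j' _ => sq_nonneg (x j'))).mp hX j (Finset.mem_univ j)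
      exact pow_eq_zero_iff two_ne_zero |>.mp h2
    have hy : ∀ i, y i = 0 := by
      intro i; rw [hydef]; simp [hxz]
    rw [hYdef] at *
    simp [hy, hX]
  · have hX0 : 0 < X := lt_of_le_of_ne (Finset.sum_nonneg fun j _ => sq_nonneg (x j)) (Ne.symm hX)
    set u' : EuclideanSpace ℝ (Fin p) := (WithLp.toLp 2 (fun i => y i / X : Fin p → ℝ) : EuclideanSpace ℝ (Fin p)) with hu'def
    have key := best_sq hb u' (WithLp.toLp 2 x : EuclideanSpace ℝ (Fin q))
    have h1 := fi_sub_sub R (tensor r s)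
    have h2 := best_fiRt hb
    have h3 := fi_tensor_self r s
    have h4 := fi_sub_sub R (tensor u' (WithLp.toLp 2 x))
    have h5 : frobInner R (tensor u' (WithLp.toLp 2 x)) = Y / X := by
      rw [fi_tensor, hYdef, Finset.sum_div]
      apply Finset.sum_congr rfl; intro i _
      show (y i / X) * (∑ j, R i j * x j) = (y i)^2 / X
      have : (∑ j, R i j * x j) = y i := rfl
      rw [this]; ring
    have h6 : frobInner (tensor u' (WithLp.toLp 2 x)) (tensor u' (WithLp.toLp 2 x)) = Y / X := by
      rw [fi_tensor_self]
      have e3 : (∑ i, (u' i)^2) = Y / X^2 := by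
        rw [hYdef, Finset.sum_div]
        apply Finset.sum_congr rfl; intro i _
        show (y i / X)^2 = (y i)^2 / X^2
        ring
      rw [e3, ← hXdef]
      field_simp
    rw [h1, h2, h3, h4, h5, h6] at key
    set σ2 : ℝ := (∑ i, (r i)^2) * (∑ j, (s j)^2) with hσ2def
    -- key : fiRR - 2σ2 + σ2 ≤ fiRR - 2 Y/X + Y/X
    have hYX : Y / X ≤ σ2 := by linarith
    have := (div_le_iff₀ hX0).mp hYX
    calc Y ≤ σ2 * X := this
      _ = σ2 * X := rfl

end Best

lemma dot_self_eq {q : ℕ} (y : Fin q → ℝ) : y ⬝ᵥ y = ∑ a, (y a)^2 := by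
  simp [dotProduct, sq]

lemma mulVec_dot_self {p q : ℕ} (A : Matrix (Fin p) (Fin q) ℝ) (x : Fin q → ℝ) :
    (A *ᵥ x) ⬝ᵥ (A *ᵥ x) = ∑ i, (∑ j, A i j * x j)^2 := by
  simp [dotProduct, Matrix.mulVec, sq]

lemma qf_gram {p q : ℕ} (A : Matrix (Fin p) (Fin q) ℝ) (x : Fin q → ℝ) :
    x ⬝ᵥ (Aᵀ * A) *ᵥ x = (A *ᵥ x) ⬝ᵥ (A *ᵥ x) := by
  rw [← Matrix.mulVec_mulVec, Matrix.dotProduct_mulVec, Matrix.vecMul_transpose]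

lemma tensor_zero_sigma {p q : ℕ} {r : EuclideanSpace ℝ (Fin p)}
    {s : EuclideanSpace ℝ (Fin q)} (h0 : tensor r s = 0) :
    (∑ i, (r i)^2) * (∑ j, (s j)^2) = 0 := by
  by_cases hr : ∀ i, r i = 0
  · simp [hr]
  · push_neg at hr
    obtain ⟨i, hi⟩ := hr
    have hs : ∀ j, s j = 0 := by
      intro j
      have := congrFun (congrFun h0 i) j
      simp only [tensor, Matrix.of_apply, Matrix.zero_apply] at this
      rcases mul_eq_zero.mp this with h | h
      · exact absurd h hi
      · exact h
    simp [hs]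


end POD

open POD

/-- Optimality of the greedy (POD) decomposition: the greedy sequence
`f_n = Σ_{k<n} r_k ⊗ s_k` obtained by successive best rank-one approximations of the
residual is a best rank-`n` approximation of `b`. -/
theorem stmt_15 {p q : ℕ} (hp : 1 ≤ p) (hq : 1 ≤ q)
    (b : Matrix (Fin p) (Fin q) ℝ)
    (f : ℕ → Matrix (Fin p) (Fin q) ℝ)
    (r : ℕ → EuclideanSpace ℝ (Fin p)) (s : ℕ → EuclideanSpace ℝ (Fin q))
    (hf0 : f 0 = 0)
    (hstep : ∀ n, f (n + 1) = f n + tensor (r n) (s n))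
    (hbest : ∀ (n : ℕ) (u : EuclideanSpace ℝ (Fin p)) (v : EuclideanSpace ℝ (Fin q)),
      frobNorm ((b - f n) - tensor (r n) (s n)) ≤ frobNorm ((b - f n) - tensor u v)) :
    ∀ n : ℕ,
      IsLeast {t : ℝ | ∃ (u : Fin n → EuclideanSpace ℝ (Fin p))
          (v : Fin n → EuclideanSpace ℝ (Fin q)),
          t = frobNorm (b - ∑ k, tensor (u k) (v k))}
        (frobNorm (b - f n)) := by
  classical
  set ρ : ℕ → ℝ := fun n => ∑ i, (r n i)^2 with hρdef
  set ς : ℕ → ℝ := fun n => ∑ j, (s n j)^2 with hςdef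
  set σ2 : ℕ → ℝ := fun n => ρ n * ς n with hσ2def
  set C : ℕ → Matrix (Fin q) (Fin q) ℝ := fun n => (b - f n)ᵀ * (b - f n) with hCdef
  have hRstep : ∀ n, b - f (n+1) = (b - f n) - tensor (r n) (s n) := by
    intro n
    rw [hstep n, sub_add_eq_sub_sub]
  have hσ0 : ∀ n, 0 ≤ σ2 n := by
    intro n
    exact mul_nonneg (Finset.sum_nonneg fun i _ => sq_nonneg _)
      (Finset.sum_nonneg fun j _ => sq_nonneg _)
  have hCsym : ∀ n, (C n)ᵀ = C n := by
    intro n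
    rw [hCdef]
    simp [Matrix.transpose_mul, Matrix.transpose_transpose]
  have hqfC : ∀ n (x : Fin q → ℝ), x ⬝ᵥ (C n) *ᵥ x = ((b - f n) *ᵥ x) ⬝ᵥ ((b - f n) *ᵥ x) :=
    fun n x => qf_gram (b - f n) x
  have hCb : ∀ n (x : Fin q → ℝ), x ⬝ᵥ (C n) *ᵥ x ≤ σ2 n * (x ⬝ᵥ x) := by
    intro n x
    rw [hqfC n x, mulVec_dot_self, dot_self_eq]
    exact best_P2 (hbest n) x
  have hC0 : ∀ n (x : Fin q → ℝ), 0 ≤ x ⬝ᵥ (C n) *ᵥ x := by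
    intro n x
    rw [hqfC n x]
    exact Finset.sum_nonneg fun i _ => mul_self_nonneg _
  -- matrix decomposition of C (n+1)
  have hCdec : ∀ n, tensor (r n) (s n) ≠ 0 →
      C (n+1) = C n - ρ n • vecMulVec (s n : Fin q → ℝ) (s n : Fin q → ℝ) := by
    intro n hne
    have hE2 := best_E2 (hbest n)
    have htRt : (b - f n)ᵀ * tensor (r n) (s n)
        = ρ n • vecMulVec (s n : Fin q → ℝ) (s n : Fin q → ℝ) := by
      ext a c
      simp only [Matrix.mul_apply, Matrix.transpose_apply, tensor, Matrix.of_apply,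
        Matrix.smul_apply, Matrix.vecMulVec_apply, smul_eq_mul]
      calc ∑ i, (b - f n) i a * (r n i * s n c)
          = (∑ i, r n i * (b - f n) i a) * s n c := by
            rw [Finset.sum_mul]
            apply Finset.sum_congr rfl; intro i _; ring
        _ = ρ n * (s n a * s n c) := by rw [hE2 a]; ring
    have httR : (tensor (r n) (s n))ᵀ * (b - f n)
        = ρ n • vecMulVec (s n : Fin q → ℝ) (s n : Fin q → ℝ) := by
      ext a c
      simp only [Matrix.mul_apply, Matrix.transpose_apply, tensor, Matrix.of_apply,
        Matrix.smul_apply, Matrix.vecMulVec_apply, smul_eq_mul]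
      calc ∑ i, (r n i * s n a) * (b - f n) i c
          = (∑ i, r n i * (b - f n) i c) * s n a := by
            rw [Finset.sum_mul]
            apply Finset.sum_congr rfl; intro i _; ring
        _ = ρ n * (s n a * s n c) := by rw [hE2 c]; ring
    have htt : (tensor (r n) (s n))ᵀ * tensor (r n) (s n)
        = ρ n • vecMulVec (s n : Fin q → ℝ) (s n : Fin q → ℝ) := by
      ext a c
      simp only [Matrix.mul_apply, Matrix.transpose_apply, tensor, Matrix.of_apply,
        Matrix.smul_apply, Matrix.vecMulVec_apply, smul_eq_mul]
      calc ∑ i, (r n i * s n a) * (r n i * s n c)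
          = (∑ i, (r n i)^2) * (s n a * s n c) := by
            rw [Finset.sum_mul]
            apply Finset.sum_congr rfl; intro i _; ring
        _ = ρ n * (s n a * s n c) := rfl
    have expand : ∀ (A T : Matrix (Fin p) (Fin q) ℝ),
        (A - T)ᵀ * (A - T) = Aᵀ * A - Aᵀ * T - Tᵀ * A + Tᵀ * T := by
      intro A T
      rw [Matrix.transpose_sub, Matrix.sub_mul, Matrix.mul_sub, Matrix.mul_sub]
      abel
    show (b - f (n+1))ᵀ * (b - f (n+1)) = _
    rw [hRstep n, expand, htRt, httR, htt]
    show (b - f n)ᵀ * (b - f n) - _ - _ + _ = _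
    abel
  -- step structure for key_L
  have hstepC : ∀ j, C j = 0 ∨ ∃ v : Fin q → ℝ, v ⬝ᵥ v = 1 ∧
      C j = C (j+1) + σ2 j • vecMulVec v v ∧ (C (j+1)) *ᵥ v = 0 := by
    intro j
    by_cases h0 : tensor (r j) (s j) = 0
    · left
      have hR := best_R_zero (hbest j) h0
      rw [hCdef]
      simp only [hR]
      simp
    · right
      have hςpos : 0 < ς j := by
        have hex : ∃ a, s j a ≠ 0 := by
          by_contra hc
          push_neg at hc
          exact h0 (by ext i a; simp [tensor, hc])
        obtain ⟨a, ha⟩ := hex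
        have h1 : (s j a)^2 ≤ ς j := Finset.single_le_sum
          (fun a' _ => sq_nonneg (s j a')) (Finset.mem_univ a)
        have h2 : 0 < (s j a)^2 := by positivity
        linarith
      set v : Fin q → ℝ := fun a => s j a / Real.sqrt (ς j) with hvdef
      have hsq : Real.sqrt (ς j) * Real.sqrt (ς j) = ς j :=
        Real.mul_self_sqrt (le_of_lt hςpos)
      have hςne : ς j ≠ 0 := ne_of_gt hςpos
      have hsqne : Real.sqrt (ς j) ≠ 0 := by
        intro h
        rw [h] at hsq
        simp at hsq
        exact hςne hsq.symm
      have hv1 : v ⬝ᵥ v = 1 := by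
        rw [dot_self_eq]
        have : ∀ a, (v a)^2 = (s j a)^2 / ς j := by
          intro a
          rw [hvdef]
          rw [div_pow, Real.sq_sqrt (le_of_lt hςpos)]
        rw [Finset.sum_congr rfl fun a _ => this a, ← Finset.sum_div]
        exact div_self hςne
      have hW : σ2 j • vecMulVec v v = ρ j • vecMulVec (s j : Fin q → ℝ) (s j : Fin q → ℝ) := by
        ext a c
        simp only [Matrix.smul_apply, Matrix.vecMulVec_apply, smul_eq_mul, hvdef]
        rw [hσ2def]
        field_simp
        rw [Real.sq_sqrt (le_of_lt hςpos)]
        ring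
      refine ⟨v, hv1, ?_, ?_⟩
      · rw [hW, hCdec j h0]
        abel
      · have hE1 := best_E1 (hbest j)
        have hE2 := best_E2 (hbest j)
        have hCjs : C j *ᵥ (s j : Fin q → ℝ) = (ς j * ρ j) • (s j : Fin q → ℝ) := by
          rw [hCdef]
          show ((b - f j)ᵀ * (b - f j)) *ᵥ (s j : Fin q → ℝ) = _
          rw [← Matrix.mulVec_mulVec]
          have h1 : (b - f j) *ᵥ (s j : Fin q → ℝ) = ς j • (r j : Fin p → ℝ) := by
            ext i
            simp only [Matrix.mulVec, dotProduct, Pi.smul_apply, smul_eq_mul]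
            exact hE1 i
          rw [h1, Matrix.mulVec_smul]
          have h2 : (b - f j)ᵀ *ᵥ (r j : Fin p → ℝ) = ρ j • (s j : Fin q → ℝ) := by
            ext a
            simp only [Matrix.mulVec, dotProduct, Matrix.transpose_apply,
              Pi.smul_apply, smul_eq_mul]
            calc ∑ i, (b - f j) i a * r j i = ∑ i, r j i * (b - f j) i a := by
                  apply Finset.sum_congr rfl; intro i _; ring
              _ = ρ j * s j a := hE2 a
          rw [h2]
          ext a
          simp only [Pi.smul_apply, PiLp.smul_apply, smul_eq_mul]
          ring
        have hWs : vecMulVec (s j : Fin q → ℝ) (s j : Fin q → ℝ) *ᵥ (s j : Fin q → ℝ)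
            = ς j • (s j : Fin q → ℝ) := by
          rw [vecMulVec_mulVec', dot_self_eq]
        have hCs : C (j+1) *ᵥ (s j : Fin q → ℝ) = 0 := by
          rw [hCdec j h0, Matrix.sub_mulVec, hCjs, Matrix.smul_mulVec, hWs]
          ext a
          simp only [Pi.sub_apply, Pi.smul_apply, PiLp.smul_apply, smul_eq_mul, Pi.zero_apply]
          ring
        have hveq : v = (Real.sqrt (ς j))⁻¹ • (s j : Fin q → ℝ) := by
          ext a
          simp only [hvdef, Pi.smul_apply, PiLp.smul_apply, smul_eq_mul]
          field_simp
        rw [hveq, Matrix.mulVec_smul, hCs]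
        simp
  -- monotonicity of σ2
  have hmono1 : ∀ k, σ2 (k+1) ≤ σ2 k := by
    intro k
    by_cases hς' : ς (k+1) = 0
    · rw [hσ2def]
      show ρ (k+1) * ς (k+1) ≤ σ2 k
      rw [hς', mul_zero]
      exact hσ0 k
    · have hς'pos : 0 < ς (k+1) :=
        lt_of_le_of_ne (Finset.sum_nonneg fun j _ => sq_nonneg _) (Ne.symm hς')
      have hqfmono : ∀ x : Fin q → ℝ, x ⬝ᵥ C (k+1) *ᵥ x ≤ x ⬝ᵥ C k *ᵥ x := by
        intro x
        by_cases h0 : tensor (r k) (s k) = 0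
        · have : C (k+1) = C k := by
            rw [hCdef]
            simp only [hRstep k, h0, sub_zero]
          rw [this]
        · rw [hCdec k h0, Matrix.sub_mulVec, dotProduct_sub]
          have h1 : 0 ≤ x ⬝ᵥ (ρ k • vecMulVec (s k : Fin q → ℝ) (s k : Fin q → ℝ)) *ᵥ x := by
            rw [Matrix.smul_mulVec, dotProduct_smul, vecMulVec_mulVec',
              dotProduct_smul]
            have hρ0 : 0 ≤ ρ k := Finset.sum_nonneg fun i _ => sq_nonneg _
            have : ((s k : Fin q → ℝ) ⬝ᵥ x) * (x ⬝ᵥ (s k : Fin q → ℝ)) ≥ 0 := by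
              rw [dotProduct_comm]
              exact mul_self_nonneg _
            simp only [smul_eq_mul]
            positivity
          linarith
      have hE1' := best_E1 (hbest (k+1))
      have key : ς (k+1) * ς (k+1) * ρ (k+1) ≤ σ2 k * ς (k+1) := by
        have h1 := hqfmono (s (k+1) : Fin q → ℝ)
        have h2 := hCb k (s (k+1) : Fin q → ℝ)
        have h3 : (s (k+1) : Fin q → ℝ) ⬝ᵥ C (k+1) *ᵥ (s (k+1) : Fin q → ℝ)
            = ς (k+1) * ς (k+1) * ρ (k+1) := by
          rw [hqfC]
          have h4 : (b - f (k+1)) *ᵥ (s (k+1) : Fin q → ℝ) = ς (k+1) • (r (k+1) : Fin p → ℝ) := by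
            ext i
            simp only [Matrix.mulVec, dotProduct, Pi.smul_apply, smul_eq_mul]
            exact hE1' i
          rw [h4, dotProduct_smul, smul_dotProduct]
          rw [dot_self_eq]
          simp only [smul_eq_mul]
          show ς (k+1) * (ς (k+1) * ρ (k+1)) = _
          ring
        have h5 : (s (k+1) : Fin q → ℝ) ⬝ᵥ (s (k+1) : Fin q → ℝ) = ς (k+1) := dot_self_eq _
        rw [h3] at h1
        rw [h5] at h2
        linarith
      have := le_of_mul_le_mul_right (by linarith [key] : ς (k+1) * ρ (k+1) * ς (k+1) ≤ σ2 k * ς (k+1)) hς'pos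
      rw [hσ2def]
      show ρ (k+1) * ς (k+1) ≤ σ2 k
      linarith
  have hmono : ∀ j k, j ≤ k → σ2 k ≤ σ2 j := by
    intro j k hjk
    induction k with
    | zero => simp at hjk; rw [hjk]
    | succ k ih =>
      rcases Nat.lt_or_ge j (k+1) with h | h
      · have := ih (by omega)
        linarith [hmono1 k]
      · have : j = k+1 := by omega
        rw [this]
  -- telescoping of the residual norm
  have htel : ∀ n, frobInner (b - f n) (b - f n)
      = frobInner b b - ∑ k ∈ Finset.range n, σ2 k := by
    intro n
    induction n with
    | zero => simp [hf0]
    | succ n ih =>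
      have h1 : frobInner (b - f (n+1)) (b - f (n+1))
          = frobInner (b - f n) (b - f n) - σ2 n := by
        rw [hRstep n, fi_sub_sub, best_fiRt (hbest n), fi_tensor_self]
        rw [hσ2def]
        show _ - 2 * (ρ n * ς n) + ρ n * ς n = _ - ρ n * ς n
        ring
      rw [h1, ih, Finset.sum_range_succ]
      ring
  -- the sum formula for f n
  have hfn : ∀ n, f n = ∑ k : Fin n, tensor (r k) (s k) := by
    intro n
    induction n with
    | zero => simp [hf0]
    | succ n ih =>
      rw [hstep n, ih, Fin.sum_univ_castSucc]
      simp [Fin.coe_castSucc, Fin.val_last]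
  intro n
  constructor
  · refine ⟨fun k => r k, fun k => s k, ?_⟩
    rw [← hfn n]
  · rintro t ⟨u, v, rfl⟩
    rw [frobNorm_le_frobNorm_iff]
    set N : Matrix (Fin p) (Fin q) ℝ := ∑ k, tensor (u k) (v k) with hNdef
    obtain ⟨M, hMs, hM0, hM1, htrn, hMM, hMv⟩ := exists_proj v
    have hNM : N * M = N := by
      rw [hNdef, Matrix.sum_mul]
      apply Finset.sum_congr rfl; intro k _
      ext i c
      simp only [Matrix.mul_apply, tensor, Matrix.of_apply]
      have h1 : ∀ a, u k i * v k a * M a c = u k i * (v k a * M a c) := fun a => by ring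
      rw [Finset.sum_congr rfl fun a _ => h1 a, ← Finset.mul_sum]
      have h2 : ∑ a, v k a * M a c = (M *ᵥ (v k : Fin q → ℝ)) c := by
        have h3 : (v k : Fin q → ℝ) ᵥ* M = M *ᵥ (v k : Fin q → ℝ) := by
          nth_rw 1 [← hMs]
          exact Matrix.vecMul_transpose M _
        have := congrFun h3 c
        simpa [Matrix.vecMul, dotProduct] using this
      rw [h2, hMv k]
    have hdecomp : b - N = b * (1 - M) + (b - N) * M := by
      rw [Matrix.mul_sub, Matrix.mul_one, Matrix.sub_mul, hNM]
      abel
    have hcross : frobInner (b * (1 - M)) ((b - N) * M) = 0 := by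
      unfold frobInner
      have h1 : (b * (1 - M))ᵀ = (1 - M) * bᵀ := by
        rw [Matrix.transpose_mul]
        congr 1
        rw [Matrix.transpose_sub, Matrix.transpose_one, hMs]
      rw [h1]
      have h2 : (1 - M) * bᵀ * ((b - N) * M) = ((1 - M) * (bᵀ * (b - N))) * M := by
        simp only [Matrix.mul_assoc]
      rw [h2, Matrix.trace_mul_comm]
      have h3 : M * ((1 - M) * (bᵀ * (b - N))) = (M * (1 - M)) * (bᵀ * (b - N)) := by
        simp only [Matrix.mul_assoc]
      rw [h3]
      have h4 : M * (1 - M) = 0 := by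
        rw [Matrix.mul_sub, Matrix.mul_one, hMM]
        abel
      rw [h4, Matrix.zero_mul, Matrix.trace_zero]
    have hsplit : frobInner (b - N) (b - N)
        = frobInner (b * (1 - M)) (b * (1 - M)) + frobInner ((b - N) * M) ((b - N) * M) := by
      have e := fi_add_add (b * (1 - M)) ((b - N) * M)
      rw [← hdecomp] at e
      rw [e, hcross]
      ring
    have hproj : frobInner (b * (1 - M)) (b * (1 - M))
        = frobInner b b - (M * C 0).trace := by
      unfold frobInner
      have h1 : (b * (1 - M))ᵀ = (1 - M) * bᵀ := by
        rw [Matrix.transpose_mul, Matrix.transpose_sub, Matrix.transpose_one, hMs]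
      rw [h1]
      have h2 : (1 - M) * bᵀ * (b * (1 - M)) = ((1 - M) * (bᵀ * b)) * (1 - M) := by
        simp only [Matrix.mul_assoc]
      rw [h2, Matrix.trace_mul_comm]
      have h3 : (1 - M) * ((1 - M) * (bᵀ * b)) = ((1 - M) * (1 - M)) * (bᵀ * b) := by
        simp only [Matrix.mul_assoc]
      rw [h3]
      have h4 : (1 - M) * (1 - M) = 1 - M := by
        rw [Matrix.mul_sub, Matrix.mul_one, Matrix.sub_mul, Matrix.one_mul, hMM]
        abel
      rw [h4, Matrix.sub_mul, Matrix.one_mul, Matrix.trace_sub]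
      have h5 : C 0 = bᵀ * b := by
        rw [hCdef]
        simp [hf0]
      rw [h5]
    have hkey := key_L C σ2 hσ0 hmono hCsym hCb hstepC n 0 M hMs hM0 hM1
    have hmax0 : max (M.trace - (n:ℝ)) 0 = 0 := max_eq_right (by linarith)
    rw [hmax0, zero_mul, add_zero] at hkey
    have hsum0 : ∑ k ∈ Finset.range n, σ2 (0 + k) = ∑ k ∈ Finset.range n, σ2 k := by
      apply Finset.sum_congr rfl; intro k _
      rw [Nat.zero_add]
    rw [hsum0] at hkey
    have hY : 0 ≤ frobInner ((b - N) * M) ((b - N) * M) := fi_self_nonneg _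
    rw [htel n]
    rw [hsplit, hproj]
    linarith
end
end

section
/- Monotonicity of the greedy (POD) rank-one terms: let b ∈ H and define a greedy sequence by f₀ = 0 and f_{n+1} = f_n + r_{n+1}⊗s_{n+1}, where (r_{n+1}, s_{n+1}) is a best rank-one approximation of b − f_n. Then the sequence of norms of the extracted rank-one terms is non-increasing: ‖r_{n+1}⊗s_{n+1}‖_F ≤ ‖r_n⊗s_n‖_F for all n ≥ 1. -/
open Matrix Filter Topology

noncomputable section

section Aux

variable {p q : ℕ}

lemma fi_eq (A B : Matrix (Fin p) (Fin q) ℝ) :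
    frobInner A B = ∑ j, ∑ i, A i j * B i j := by
  simp [frobInner, Matrix.trace, Matrix.mul_apply, Matrix.diag, Matrix.transpose_apply]

lemma fi_comm (A B : Matrix (Fin p) (Fin q) ℝ) : frobInner A B = frobInner B A := by
  simp [fi_eq, mul_comm]

lemma fi_sub_left (A B C : Matrix (Fin p) (Fin q) ℝ) :
    frobInner (A - B) C = frobInner A C - frobInner B C := by
  simp [fi_eq, Matrix.sub_apply, sub_mul, Finset.sum_sub_distrib]

lemma fi_sub_right (A B C : Matrix (Fin p) (Fin q) ℝ) :
    frobInner A (B - C) = frobInner A B - frobInner A C := by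
  simp [fi_eq, Matrix.sub_apply, mul_sub, Finset.sum_sub_distrib]

lemma fi_add_right (A B C : Matrix (Fin p) (Fin q) ℝ) :
    frobInner A (B + C) = frobInner A B + frobInner A C := by
  simp [fi_eq, Matrix.add_apply, mul_add, Finset.sum_add_distrib]

lemma fi_smul_right (a : ℝ) (A B : Matrix (Fin p) (Fin q) ℝ) :
    frobInner A (a • B) = a * frobInner A B := by
  simp [fi_eq, Matrix.smul_apply, Finset.mul_sum, smul_eq_mul]; ring_nf
  exact Finset.sum_congr rfl fun j _ => Finset.sum_congr rfl fun i _ => by ring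

lemma fi_self_nonneg (A : Matrix (Fin p) (Fin q) ℝ) : 0 ≤ frobInner A A := by
  rw [fi_eq]
  exact Finset.sum_nonneg fun j _ => Finset.sum_nonneg fun i _ => mul_self_nonneg _

lemma tensor_fi (u u' : EuclideanSpace ℝ (Fin p)) (v v' : EuclideanSpace ℝ (Fin q)) :
    frobInner (tensor u v) (tensor u' v') = (∑ i, u i * u' i) * (∑ j, v j * v' j) := by
  rw [fi_eq]
  simp only [tensor, Matrix.of_apply, Finset.sum_mul, Finset.mul_sum]
  exact Finset.sum_congr rfl fun j _ => Finset.sum_congr rfl fun i _ => by ring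

lemma tensor_smul_left (a : ℝ) (u : EuclideanSpace ℝ (Fin p)) (v : EuclideanSpace ℝ (Fin q)) :
    tensor (a • u) v = a • tensor u v := by
  ext i j; simp [tensor, Matrix.smul_apply]; ring

lemma tensor_add_left (u u' : EuclideanSpace ℝ (Fin p)) (v : EuclideanSpace ℝ (Fin q)) :
    tensor (u + u') v = tensor u v + tensor u' v := by
  ext i j; simp [tensor, Matrix.add_apply]; ring

lemma tensor_smul_right (a : ℝ) (u : EuclideanSpace ℝ (Fin p)) (v : EuclideanSpace ℝ (Fin q)) :
    tensor u (a • v) = a • tensor u v := by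
  ext i j; simp [tensor, Matrix.smul_apply]; ring

lemma tensor_add_right (u : EuclideanSpace ℝ (Fin p)) (v v' : EuclideanSpace ℝ (Fin q)) :
    tensor u (v + v') = tensor u v + tensor u v' := by
  ext i j; simp [tensor, Matrix.add_apply]; ring

lemma fi_smul_left (a : ℝ) (A B : Matrix (Fin p) (Fin q) ℝ) :
    frobInner (a • A) B = a * frobInner A B := by
  rw [fi_comm, fi_smul_right, fi_comm]

lemma expand_sub (X Y : Matrix (Fin p) (Fin q) ℝ) :
    frobInner (X - Y) (X - Y)
      = frobInner X X - 2 * frobInner X Y + frobInner Y Y := by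
  rw [fi_sub_left, fi_sub_right, fi_sub_right, fi_comm Y X]; ring

lemma orth_scale (X T : Matrix (Fin p) (Fin q) ℝ)
    (h : ∀ a : ℝ, frobInner (X - T) (X - T) ≤ frobInner (X - a • T) (X - a • T)) :
    frobInner X T = frobInner T T := by
  set c := frobInner X T with hc
  set N := frobInner T T with hN
  have key : ∀ a : ℝ, N - 2 * c ≤ a ^ 2 * N - 2 * a * c := by
    intro a
    have h' := h a
    rw [expand_sub, expand_sub, fi_smul_right] at h'
    have : frobInner (a • T) (a • T) = a ^ 2 * N := by
      rw [fi_smul_left, fi_smul_right]; ring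
    rw [this] at h'
    linarith
  have hN0 : 0 ≤ N := fi_self_nonneg T
  rcases eq_or_lt_of_le hN0 with h0 | h0
  · have k0 := key 0
    have k2 := key 2
    have hc0 : c = 0 := by nlinarith
    rw [hc0, ← h0]
  · have k := key (c / N)
    have h1 : (N - c) ^ 2 ≤ 0 := by
      have e1 : (c / N) ^ 2 * N = c ^ 2 / N := by field_simp
      have e2 : 2 * (c / N) * c = 2 * (c ^ 2 / N) := by field_simp
      rw [e1, e2] at k
      have := mul_le_mul_of_nonneg_right k (le_of_lt h0)
      have hNne : N ≠ 0 := ne_of_gt h0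
      field_simp at this
      nlinarith
    nlinarith [sq_nonneg (N - c)]

lemma orth_lin (X T W : Matrix (Fin p) (Fin q) ℝ)
    (h : ∀ a : ℝ, frobInner (X - T) (X - T)
        ≤ frobInner (X - (T + a • W)) (X - (T + a • W))) :
    frobInner (X - T) W = 0 := by
  set c := frobInner (X - T) W with hc
  set N := frobInner W W with hN
  have key : ∀ a : ℝ, 0 ≤ a ^ 2 * N - 2 * a * c := by
    intro a
    have h' := h a
    have e : X - (T + a • W) = (X - T) - a • W := by abel
    rw [e] at h'
    have e3 : frobInner (X - T - a • W) (X - T - a • W)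
        = frobInner (X - T) (X - T) - 2 * (a * c) + a ^ 2 * N := by
      rw [expand_sub, fi_smul_right]
      have : frobInner (a • W) (a • W) = a ^ 2 * N := by
        rw [fi_smul_left, fi_smul_right]; ring
      rw [this]
    rw [e3] at h'
    linarith
  have hN0 : 0 ≤ N := fi_self_nonneg W
  have hN1 : (0:ℝ) < N + 1 := by linarith
  have k := key (c / (N + 1))
  set d := c / (N + 1) with hd
  have hcd : c = d * (N + 1) := by rw [hd]; field_simp
  rw [hcd] at k
  have hd0 : d = 0 := by nlinarith [sq_nonneg d]
  rw [hcd, hd0]; ring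

lemma cs_bound (X T W : Matrix (Fin p) (Fin q) ℝ)
    (hIT : frobInner X T = frobInner T T)
    (h : ∀ a : ℝ, frobInner (X - T) (X - T) ≤ frobInner (X - a • W) (X - a • W)) :
    (frobInner X W) ^ 2 ≤ frobInner T T * frobInner W W := by
  set c := frobInner X W with hc
  set N := frobInner W W with hN
  set Q := frobInner T T with hQ
  have key : ∀ a : ℝ, 2 * a * c - a ^ 2 * N ≤ Q := by
    intro a
    have h' := h a
    rw [expand_sub, expand_sub, fi_smul_right, hIT] at h'
    have : frobInner (a • W) (a • W) = a ^ 2 * N := by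
      rw [fi_smul_left, fi_smul_right]; ring
    rw [this] at h'
    linarith
  have hN0 : 0 ≤ N := fi_self_nonneg W
  have hQ0 : 0 ≤ Q := fi_self_nonneg T
  rcases eq_or_lt_of_le hN0 with h0 | h0
  · have hc0 : c = 0 := by
      by_contra hcne
      have k := key ((Q + 1) / (2 * c))
      have e : 2 * ((Q + 1) / (2 * c)) * c = Q + 1 := by field_simp
      rw [e, ← h0] at k
      nlinarith
    rw [hc0, ← h0]; simp
  · have k := key (c / N)
    have e1 : (c / N) ^ 2 * N = c ^ 2 / N := by field_simp
    have e2 : 2 * (c / N) * c = 2 * (c ^ 2 / N) := by field_simp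
    rw [e1, e2] at k
    have := mul_le_mul_of_nonneg_right k (le_of_lt h0)
    have hNne : N ≠ 0 := ne_of_gt h0
    field_simp at this
    nlinarith

lemma proj_exists {m : ℕ} (u w : EuclideanSpace ℝ (Fin m)) :
    ∃ c : ℝ, (∑ i, w i * (u - c • w) i = 0) ∧
      (∑ i, (u - c • w) i * (u - c • w) i ≤ ∑ i, u i * u i) := by
  by_cases hw : (∑ i, w i * w i) = 0
  · refine ⟨0, ?_, ?_⟩
    · have hwz : ∀ i, w i = 0 := by
        intro i
        have h := (Finset.sum_eq_zero_iff_of_nonneg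
          (fun i _ => mul_self_nonneg (w i))).mp hw i (Finset.mem_univ i)
        nlinarith
      simp [hwz]
    · simp
  · refine ⟨(∑ i, w i * u i) / (∑ i, w i * w i), ?_, ?_⟩
    · have e : ∀ c : ℝ, ∑ i, w i * (u - c • w) i
          = (∑ i, w i * u i) - c * (∑ i, w i * w i) := by
        intro c
        simp only [PiLp.sub_apply, PiLp.smul_apply, smul_eq_mul, mul_sub,
          Finset.sum_sub_distrib, Finset.mul_sum]
        congr 1
        exact Finset.sum_congr rfl fun i _ => by ring
      rw [e]
      rw [div_mul_cancel₀ _ hw, sub_self]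
    · set c := (∑ i, w i * u i) / (∑ i, w i * w i) with hcdef
      have e : ∑ i, (u - c • w) i * (u - c • w) i
          = (∑ i, u i * u i) - 2 * c * (∑ i, w i * u i) + c ^ 2 * (∑ i, w i * w i) := by
        have e0 : ∀ i : Fin m, (u - c • w) i * (u - c • w) i
            = u i * u i - 2 * c * (w i * u i) + c ^ 2 * (w i * w i) := by
          intro i
          simp only [PiLp.sub_apply, PiLp.smul_apply, smul_eq_mul]
          ring
        rw [Finset.sum_congr rfl fun i _ => e0 i]
        simp [Finset.sum_add_distrib, Finset.sum_sub_distrib, Finset.mul_sum]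
      rw [e]
      have hww : 0 < ∑ i, w i * w i := by
        rcases lt_or_eq_of_le (Finset.sum_nonneg fun i _ => mul_self_nonneg (w i)) with h | h
        · exact h
        · exact absurd h.symm hw
      have : 2 * c * (∑ i, w i * u i) - c ^ 2 * (∑ i, w i * w i)
          = (∑ i, w i * u i) ^ 2 / (∑ i, w i * w i) := by
        rw [hcdef]; field_simp; ring
      nlinarith [sq_nonneg (∑ i, w i * u i), div_nonneg (sq_nonneg (∑ i, w i * u i)) hww.le]

end Aux

/-- Monotonicity of the greedy (POD) rank-one terms: the norms of the successively
extracted rank-one terms are non-increasing. -/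
theorem stmt_16 {p q : ℕ} (hp : 1 ≤ p) (hq : 1 ≤ q)
    (b : Matrix (Fin p) (Fin q) ℝ)
    (f : ℕ → Matrix (Fin p) (Fin q) ℝ)
    (r : ℕ → EuclideanSpace ℝ (Fin p)) (s : ℕ → EuclideanSpace ℝ (Fin q))
    (hf0 : f 0 = 0)
    (hstep : ∀ n, f (n + 1) = f n + tensor (r n) (s n))
    (hbest : ∀ (n : ℕ) (u : EuclideanSpace ℝ (Fin p)) (v : EuclideanSpace ℝ (Fin q)),
      frobNorm ((b - f n) - tensor (r n) (s n)) ≤ frobNorm ((b - f n) - tensor u v)) :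
    ∀ n : ℕ, frobNorm (tensor (r (n + 1)) (s (n + 1))) ≤ frobNorm (tensor (r n) (s n)) := by
  -- squared version of the best-approximation property
  have key : ∀ (m : ℕ) (u : EuclideanSpace ℝ (Fin p)) (v : EuclideanSpace ℝ (Fin q)),
      frobInner ((b - f m) - tensor (r m) (s m)) ((b - f m) - tensor (r m) (s m))
        ≤ frobInner ((b - f m) - tensor u v) ((b - f m) - tensor u v) := by
    intro m u v
    have h := hbest m u v
    unfold frobNorm at h
    calc frobInner ((b - f m) - tensor (r m) (s m)) ((b - f m) - tensor (r m) (s m))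
        = (Real.sqrt (frobInner ((b - f m) - tensor (r m) (s m))
            ((b - f m) - tensor (r m) (s m)))) ^ 2 := (Real.sq_sqrt (fi_self_nonneg _)).symm
      _ ≤ (Real.sqrt (frobInner ((b - f m) - tensor u v) ((b - f m) - tensor u v))) ^ 2 :=
          pow_le_pow_left₀ (Real.sqrt_nonneg _) h 2
      _ = frobInner ((b - f m) - tensor u v) ((b - f m) - tensor u v) :=
          Real.sq_sqrt (fi_self_nonneg _)
  intro n
  set R := b - f n with hR
  set t := tensor (r n) (s n) with ht
  set t' := tensor (r (n+1)) (s (n+1)) with ht'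
  have hE : b - f (n + 1) = R - t := by rw [hstep n, hR, ht, sub_add_eq_sub_sub]
  -- orthogonality at step n+1
  have h1 : frobInner (R - t) t' = frobInner t' t' := by
    apply orth_scale
    intro a
    have h := key (n+1) (a • r (n+1)) (s (n+1))
    rwa [hE, tensor_smul_left, ← ht'] at h
  -- orthogonality at step n
  have h2 : frobInner R t = frobInner t t := by
    apply orth_scale
    intro a
    have h := key n (a • r n) (s n)
    rwa [tensor_smul_left, ← hR, ← ht] at h
  -- partial orthogonality of the residual
  have h3 : ∀ u : EuclideanSpace ℝ (Fin p), frobInner (R - t) (tensor u (s n)) = 0 := by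
    intro u
    apply orth_lin
    intro a
    have h := key n (r n + a • u) (s n)
    rwa [tensor_add_left, tensor_smul_left, ← hR, ← ht] at h
  have h4 : ∀ v : EuclideanSpace ℝ (Fin q), frobInner (R - t) (tensor (r n) v) = 0 := by
    intro v
    apply orth_lin
    intro a
    have h := key n (r n) (s n + a • v)
    rwa [tensor_add_right, tensor_smul_right, ← hR, ← ht] at h
  -- projections
  obtain ⟨a, hau, haU⟩ := proj_exists (r (n+1)) (r n)
  obtain ⟨c, hcv, hcV⟩ := proj_exists (s (n+1)) (s n)
  set u' := r (n+1) - a • r n with hu'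
  set v' := s (n+1) - c • s n with hv'
  -- decomposition of t'
  have hdec : t' = tensor u' v' + c • tensor u' (s n) + a • tensor (r n) v'
      + (a * c) • t := by
    ext i j
    have hri : r (n+1) i = u' i + a * r n i := by
      rw [hu']; simp only [PiLp.sub_apply, PiLp.smul_apply, smul_eq_mul]; ring
    have hsj : s (n+1) j = v' j + c * s n j := by
      rw [hv']; simp only [PiLp.sub_apply, PiLp.smul_apply, smul_eq_mul]; ring
    simp only [ht', ht, tensor, Matrix.add_apply, Matrix.smul_apply, Matrix.of_apply,
      smul_eq_mul]
    rw [hri, hsj]; ring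
  have h5 : frobInner (R - t) t = 0 := h3 (r n)
  have h6 : frobInner (R - t) t' = frobInner (R - t) (tensor u' v') := by
    rw [hdec, fi_add_right, fi_add_right, fi_add_right, fi_smul_right, fi_smul_right,
      fi_smul_right, h3 u', h4 v', h5]
    ring
  have h7 : frobInner (R - t) (tensor u' v') = frobInner R (tensor u' v') := by
    rw [fi_sub_left, ht, tensor_fi, hcv]
    ring
  -- Cauchy–Schwarz-type bound from the best approximation at step n
  have h8 : (frobInner R (tensor u' v')) ^ 2
      ≤ frobInner t t * frobInner (tensor u' v') (tensor u' v') := by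
    apply cs_bound R t (tensor u' v') h2
    intro a
    have h := key n (a • u') v'
    rwa [tensor_smul_left, ← hR, ← ht] at h
  have hvnn : (0:ℝ) ≤ ∑ j, v' j * v' j :=
    Finset.sum_nonneg fun j _ => mul_self_nonneg _
  have hrnn : (0:ℝ) ≤ ∑ i, r (n+1) i * r (n+1) i :=
    Finset.sum_nonneg fun i _ => mul_self_nonneg _
  have h9 : frobInner (tensor u' v') (tensor u' v') ≤ frobInner t' t' := by
    rw [tensor_fi, ht', tensor_fi]
    exact mul_le_mul haU hcV hvnn hrnn
  have h10 : frobInner t' t' = frobInner R (tensor u' v') := by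
    rw [← h1, h6, h7]
  have h11 : (frobInner t' t') ^ 2 ≤ frobInner t t * frobInner t' t' := by
    calc (frobInner t' t') ^ 2 = (frobInner R (tensor u' v')) ^ 2 := by rw [h10]
      _ ≤ frobInner t t * frobInner (tensor u' v') (tensor u' v') := h8
      _ ≤ frobInner t t * frobInner t' t' :=
          mul_le_mul_of_nonneg_left h9 (fi_self_nonneg t)
  have h12 : frobInner t' t' ≤ frobInner t t := by
    rcases eq_or_lt_of_le (fi_self_nonneg t') with h0 | h0
    · rw [← h0]; exact fi_self_nonneg t
    · nlinarith
  unfold frobNorm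
  exact Real.sqrt_le_sqrt h12

end
end
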